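/- The profile tree T of an NBW A on an infinite word w is accepting if and only if A accepts w; that is, T has an infinite branch containing infinitely many F-classes iff A has an accepting run on w. -/

import Mathlib

/-!
Profile trees for Büchi determinization (Fisman–Kupferman–Vardi–Wilke style profiles).
Common definitions: nondeterministic Büchi word automata (NBW), the run DAG `G`,
profiles of nodes, and the pruned run DAG `G'`.
-/

/-- A nondeterministic Büchi word automaton `A = (Alph, Q, Qin, ρ, F)` with `Qin ∩ F = ∅`. -/
structure NBW (Alph Q : Type*) where
  Qin : Set Q
  ρ : Q → Alph → Set Q
  F : Set Q
  disj : Qin ∩ F = ∅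

variable {Alph Q : Type*} (A : NBW Alph Q) (w : ℕ → Alph)

/-- Lexicographic order `L₁ ≤ L₂` on profiles (lists over ℕ). -/
def lexLE (L₁ L₂ : List ℕ) : Prop :=
  List.Lex (· < ·) L₁ L₂ ∨ L₁ = L₂

/-- Strict lexicographic order `L₁ < L₂` on profiles. -/
def lexLT (L₁ L₂ : List ℕ) : Prop :=
  List.Lex (· < ·) L₁ L₂

open Classical in
/-- The profiles of all finite initial runs of `A` (on `w`) to the node `v = (q, i)`:
for each run `p₀,…,p_i` with `p₀ ∈ Qin`, `p_{j+1} ∈ ρ(p_j, w_j)` and `p_i = q`, the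
sequence of `F`-visitation labels `f(p₀,0) ⋯ f(p_i,i)` (where `f` is 1 on `F`-nodes, else 0). -/
def runProfiles (v : Q × ℕ) : Set (List ℕ) :=
  { L | ∃ p : ℕ → Q, p 0 ∈ A.Qin ∧ (∀ j < v.2, p (j + 1) ∈ A.ρ (p j) (w j)) ∧
        p v.2 = v.1 ∧ L = (List.range (v.2 + 1)).map (fun j => if p j ∈ A.F then 1 else 0) }

/-- `v` is a node of the run DAG `G = (V, E)` (equivalently of the pruned DAG `G'`):
there is a finite run of `A` to `v.1` on `w₀ ⋯ w_{v.2 - 1}`. -/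
def memV (v : Q × ℕ) : Prop := (runProfiles A w v).Nonempty

/-- `L` is the lexicographically maximal profile among all initial paths to `v`. -/
def IsMaxProfile (v : Q × ℕ) (L : List ℕ) : Prop :=
  L ∈ runProfiles A w v ∧ ∀ L' ∈ runProfiles A w v, lexLE L' L

open Classical in
/-- The profile `h_v` of a node `v`: the lexicographically maximal profile of an
initial path to `v` (junk value `[]` if `v` is not a node of the DAG). -/
noncomputable def profile (v : Q × ℕ) : List ℕ :=
  if h : ∃ L, IsMaxProfile A w v L then h.choose else []

/-- The edge relation `E` of the run DAG `G`: `E((q,i), (q',i+1))` iff `(q,i) ∈ V`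
and `q' ∈ ρ(q, w_i)`. -/
def edgeG (u v : Q × ℕ) : Prop :=
  memV A w u ∧ v.2 = u.2 + 1 ∧ v.1 ∈ A.ρ u.1 (w u.2)

/-- The edge relation `E'` of the pruned run DAG `G'`: `(u,v) ∈ E` and every
`E`-parent `u'` of `v` satisfies `h_{u'} ≤ h_u`. -/
def edgeG' (u v : Q × ℕ) : Prop :=
  edgeG A w u v ∧ ∀ u', edgeG A w u' v → lexLE (profile A w u') (profile A w u)

/-- `A` accepts `w`: some run visits `F` infinitely often. -/
def AcceptsNBW : Prop :=
  ∃ p : ℕ → Q, (p 0 ∈ A.Qin ∧ ∀ i, p (i + 1) ∈ A.ρ (p i) (w i)) ∧ ∀ n, ∃ i ≥ n, p i ∈ A.F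

/-- The equivalence class (under equality of profiles, levelwise) of a node `u` of `G'`. -/
def classOf (u : Q × ℕ) : Set (Q × ℕ) :=
  { v | memV A w v ∧ v.2 = u.2 ∧ profile A w v = profile A w u }

/-- `C` is a class (node) of the profile tree `T` on level `i`. -/
def ClassAt (C : Set (Q × ℕ)) (i : ℕ) : Prop :=
  ∃ u, memV A w u ∧ u.2 = i ∧ C = classOf A w u

/-- The child relation of the profile tree `T`: `[v]` is a child of `[u]`
whenever `(u, v) ∈ E'`. -/
def childC (C D : Set (Q × ℕ)) : Prop :=
  ∃ u v, edgeG' A w u v ∧ memV A w v ∧ C = classOf A w u ∧ D = classOf A w v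

/-- `D` is a descendant of `C` in `T`: there is a (possibly empty) path from `C` to `D`. -/
def DescC : Set (Q × ℕ) → Set (Q × ℕ) → Prop := Relation.ReflTransGen (childC A w)

/-- `C` is an `F`-class: all its members are `F`-nodes. -/
def IsFClass (C : Set (Q × ℕ)) : Prop := ∀ v ∈ C, v.1 ∈ A.F

/-- `h_C ≤ h_D` for classes `C`, `D` (members of a class all share one profile). -/
def profLE (C D : Set (Q × ℕ)) : Prop :=
  ∀ u ∈ C, ∀ v ∈ D, lexLE (profile A w u) (profile A w v)

/-- `h_C < h_D` for classes `C`, `D`. -/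
def profLT (C D : Set (Q × ℕ)) : Prop :=
  ∀ u ∈ C, ∀ v ∈ D, lexLT (profile A w u) (profile A w v)

/-- An infinite branch of `T`: a class on each level, consecutive ones related by the
child relation. -/
def IsBranch (b : ℕ → Set (Q × ℕ)) : Prop :=
  (∀ i, ClassAt A w (b i) i) ∧ ∀ i, childC A w (b i) (b (i + 1))

/-- The profile tree `T` is accepting: it has an infinite branch containing
infinitely many `F`-classes. -/
def TreeAccepting : Prop :=
  ∃ b : ℕ → Set (Q × ℕ), IsBranch A w b ∧ ∀ n, ∃ i ≥ n, IsFClass A (b i)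
theorem lexLT_iff {L M : List ℕ} : lexLT L M ↔ L < M := Iff.rfl

theorem lexLE_iff {L M : List ℕ} : lexLE L M ↔ L ≤ M := or_comm

-- strict append for equal lengths
theorem lex_append_of_length_eq {L M P R : List ℕ} (h : List.Lex (· < ·) L M)
    (hl : L.length = M.length) : List.Lex (· < ·) (L ++ P) (M ++ R) := by
  induction h with
  | nil => simp at hl
  | cons h ih => exact List.Lex.cons (ih (by simpa using hl))
  | rel h => exact List.Lex.rel h

theorem lt_append_of_length_eq {L M P R : List ℕ} (h : L < M)
    (hl : L.length = M.length) : L ++ P < M ++ R :=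
  lex_append_of_length_eq h hl

theorem le_append_last {L M : List ℕ} (h : L ≤ M) (hl : L.length = M.length) (a : ℕ) :
    L ++ [a] ≤ M ++ [a] := by
  rcases eq_or_lt_of_le h with rfl | h
  · exact le_rfl
  · exact le_of_lt (lt_append_of_length_eq h hl)

theorem le_take_of_le {L M : List ℕ} (h : L ≤ M) (hl : L.length = M.length) (k : ℕ) :
    L.take k ≤ M.take k := by
  by_contra hc
  push_neg at hc
  have h2 : M < L := by
    have := lt_append_of_length_eq (P := M.drop k) (R := L.drop k) hc
      (by simp [hl])
    simpa [List.take_append_drop] using this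
  exact absurd h (not_le.mpr h2)

theorem le_cancel_prefix {L γ δ : List ℕ} (h : L ++ γ ≤ L ++ δ) : γ ≤ δ := by
  by_contra hc
  push_neg at hc
  have : L ++ δ < L ++ γ := List.Lex.append_left _ hc L
  exact absurd h (not_le.mpr this)

theorem replicate_zero_le (γ : List ℕ) : List.replicate γ.length 0 ≤ γ := by
  induction γ with
  | nil => simp
  | cons a t ih =>
    rcases Nat.eq_zero_or_pos a with rfl | ha
    · rcases eq_or_lt_of_le ih with h | h
      · simp [List.replicate_succ, h]
      · exact le_of_lt (List.Lex.cons h)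
    · exact le_of_lt (List.Lex.rel ha)

theorem eq_replicate_of_le_replicate {γ : List ℕ} {k : ℕ} (h : γ ≤ List.replicate k 0)
    (hl : γ.length = k) : γ = List.replicate k 0 := by
  subst hl
  exact le_antisymm h (replicate_zero_le γ)

open Classical

/-! ### Section B : profiles -/

section B
variable {Alph Q : Type*} {A : NBW Alph Q} {w : ℕ → Alph}

theorem mem_length {v : Q × ℕ} {L : List ℕ} (h : L ∈ runProfiles A w v) :
    L.length = v.2 + 1 := by
  obtain ⟨p, -, -, -, rfl⟩ := h
  simp

theorem mem_entries {v : Q × ℕ} {L : List ℕ} (h : L ∈ runProfiles A w v) :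
    ∀ x ∈ L, x ≤ 1 := by
  obtain ⟨p, -, -, -, rfl⟩ := h
  intro x hx
  simp only [List.mem_map] at hx
  obtain ⟨j, -, rfl⟩ := hx
  split <;> simp

theorem mem_concat {v : Q × ℕ} {L : List ℕ} (h : L ∈ runProfiles A w v) :
    ∃ L', L = L' ++ [if v.1 ∈ A.F then 1 else 0] := by
  obtain ⟨p, -, -, hpv, rfl⟩ := h
  refine ⟨(List.range (v.2)).map (fun j => if p j ∈ A.F then 1 else 0), ?_⟩
  rw [List.range_succ, List.map_append, List.map_singleton, hpv]

theorem mem_zero {v : Q × ℕ} (hv : v.2 = 0) {L : List ℕ} (h : L ∈ runProfiles A w v) :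
    L = [0] ∧ v.1 ∈ A.Qin := by
  obtain ⟨p, hin, -, hpv, rfl⟩ := h
  rw [hv] at hpv ⊢
  have hnF : p 0 ∉ A.F := fun hF => by
    have : p 0 ∈ A.Qin ∩ A.F := ⟨hin, hF⟩
    rw [A.disj] at this; exact this
  constructor
  · simp [List.range_succ, if_neg hnF]
  · rwa [← hpv]

theorem mem_succ_elim {v : Q × ℕ} {m : ℕ} (hv : v.2 = m + 1) {L : List ℕ}
    (h : L ∈ runProfiles A w v) :
    ∃ u L', edgeG A w u v ∧ u.2 = m ∧ L' ∈ runProfiles A w u ∧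
      L = L' ++ [if v.1 ∈ A.F then 1 else 0] := by
  obtain ⟨p, hin, hstep, hpv, rfl⟩ := h
  refine ⟨(p m, m), (List.range (m + 1)).map (fun j => if p j ∈ A.F then 1 else 0),
    ?_, rfl, ⟨p, hin, fun j hj => hstep j (by omega), rfl, rfl⟩, ?_⟩
  · refine ⟨⟨_, ⟨p, hin, fun j hj => hstep j (by omega), rfl, rfl⟩⟩, by simp [hv], ?_⟩
    have := hstep m (by omega)
    rw [hv] at hpv; rw [← hpv]; exact this
  · rw [hv, List.range_succ, List.map_append, List.map_singleton]
    rw [hv] at hpv; rw [hpv]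

theorem mem_succ_intro {u v : Q × ℕ} (he : edgeG A w u v) {L : List ℕ}
    (h : L ∈ runProfiles A w u) :
    L ++ [if v.1 ∈ A.F then 1 else 0] ∈ runProfiles A w v := by
  obtain ⟨p, hin, hstep, hpu, rfl⟩ := h
  obtain ⟨-, hlev, hρ⟩ := he
  refine ⟨fun j => if j = u.2 + 1 then v.1 else p j, by simpa using hin, ?_, by simp [hlev], ?_⟩
  · intro j hj
    rw [hlev] at hj
    rcases Nat.lt_succ_iff_lt_or_eq.mp hj with hj' | rfl
    · simp only [if_neg (by omega : j + 1 ≠ u.2 + 1), if_neg (by omega : j ≠ u.2 + 1)]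
      exact hstep j hj'
    · simp only [if_pos rfl, if_neg (by omega : u.2 ≠ u.2 + 1)]
      rwa [hpu]
  · rw [hlev]
    conv_rhs => rw [List.range_succ, List.map_append, List.map_singleton]
    congr 1
    · apply List.map_congr_left
      intro j hj
      simp only [List.mem_range] at hj
      simp only [if_neg (show ¬ j = u.2 + 1 by omega)]
    · simp

theorem memV_of_edge {u v : Q × ℕ} (he : edgeG A w u v) : memV A w v := by
  obtain ⟨L, hL⟩ := he.1
  exact ⟨_, mem_succ_intro he hL⟩

theorem parents_finite [Fintype Q] {v : Q × ℕ} {m : ℕ} (hv : v.2 = m + 1) :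
    {u | edgeG A w u v}.Finite := by
  apply Set.Finite.subset ((Set.finite_univ (α := Q)).image (fun q => (q, m)))
  rintro ⟨q, i⟩ hu
  have : i = m := by have := hu.2.1; rw [hv] at this; omega
  exact ⟨q, trivial, by rw [this]⟩

theorem exists_isMaxProfile [Fintype Q] : ∀ n (v : Q × ℕ), v.2 = n → memV A w v →
    ∃ L, IsMaxProfile A w v L := by
  intro n
  induction n with
  | zero =>
    rintro v hv ⟨L, hL⟩
    obtain ⟨rfl, -⟩ := mem_zero hv hL
    exact ⟨[0], hL, fun L' hL' => Or.inr (mem_zero hv hL').1⟩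
  | succ m ih =>
    rintro v hv ⟨L, hL⟩
    obtain ⟨u₀, L₀, he₀, -, hL₀, -⟩ := mem_succ_elim hv hL
    have hmaxu : ∀ u, edgeG A w u v → IsMaxProfile A w u (profile A w u) := by
      intro u hu
      have hlev : u.2 = m := by have := hu.2.1; rw [hv] at this; omega
      have hex : ∃ L, IsMaxProfile A w u L := ih u hlev hu.1
      rw [profile, dif_pos hex]
      exact hex.choose_spec
    obtain ⟨ustar, hustar, hmax⟩ :=
      Set.exists_max_image {u | edgeG A w u v} (profile A w) (parents_finite hv) ⟨u₀, he₀⟩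
    refine ⟨profile A w ustar ++ [if v.1 ∈ A.F then 1 else 0],
      mem_succ_intro hustar (hmaxu ustar hustar).1, ?_⟩
    intro L' hL'
    obtain ⟨u', L₁, he', hlev', hL₁, rfl⟩ := mem_succ_elim hv hL'
    have h1 : L₁ ≤ profile A w u' := lexLE_iff.mp ((hmaxu u' he').2 L₁ hL₁)
    have h2 : profile A w u' ≤ profile A w ustar := hmax u' he'
    have hlen1 : L₁.length = (profile A w u').length := by
      rw [mem_length hL₁, mem_length (hmaxu u' he').1]
    have hlev'' : u'.2 = ustar.2 := by
      have a1 := he'.2.1; have a2 := hustar.2.1; omega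
    have hlen2 : (profile A w u').length = (profile A w ustar).length := by
      rw [mem_length (hmaxu u' he').1, mem_length (hmaxu ustar hustar).1, hlev'']
    exact lexLE_iff.mpr (le_append_last (le_trans h1 h2) (by omega) _)

theorem profile_isMax [Fintype Q] {v : Q × ℕ} (hv : memV A w v) :
    IsMaxProfile A w v (profile A w v) := by
  have hex := exists_isMaxProfile v.2 v rfl hv
  rw [profile, dif_pos hex]
  exact hex.choose_spec

theorem profile_mem [Fintype Q] {v : Q × ℕ} (hv : memV A w v) :
    profile A w v ∈ runProfiles A w v := (profile_isMax hv).1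

theorem profile_max [Fintype Q] {v : Q × ℕ} (hv : memV A w v) {L : List ℕ}
    (hL : L ∈ runProfiles A w v) : L ≤ profile A w v :=
  lexLE_iff.mp ((profile_isMax hv).2 L hL)

theorem profile_length [Fintype Q] {v : Q × ℕ} (hv : memV A w v) :
    (profile A w v).length = v.2 + 1 := mem_length (profile_mem hv)

theorem profile_concat [Fintype Q] {v : Q × ℕ} (hv : memV A w v) :
    ∃ L', profile A w v = L' ++ [if v.1 ∈ A.F then 1 else 0] := mem_concat (profile_mem hv)

theorem profile_zero [Fintype Q] {v : Q × ℕ} (hv : memV A w v) (h0 : v.2 = 0) :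
    profile A w v = [0] := (mem_zero h0 (profile_mem hv)).1

theorem exists_edgeG'_parent [Fintype Q] {v : Q × ℕ} {m : ℕ} (hv : memV A w v)
    (hm : v.2 = m + 1) :
    ∃ u, edgeG' A w u v ∧ u.2 = m ∧ memV A w u ∧
      profile A w v = profile A w u ++ [if v.1 ∈ A.F then 1 else 0] := by
  obtain ⟨L, hL⟩ := hv
  obtain ⟨u₀, L₀, he₀, -, hL₀, -⟩ := mem_succ_elim hm hL
  obtain ⟨ustar, hustar, hmax⟩ :=
    Set.exists_max_image {u | edgeG A w u v} (profile A w) (parents_finite hm) ⟨u₀, he₀⟩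
  have hustar' : edgeG A w ustar v := hustar
  have hlevstar : ustar.2 = m := by have := hustar'.2.1; rw [hm] at this; omega
  refine ⟨ustar, ⟨hustar', fun u' hu' => lexLE_iff.mpr (hmax u' hu')⟩, hlevstar, hustar'.1, ?_⟩
  -- profile v = profile ustar ++ [bit]
  apply le_antisymm
  · -- profile v ≤ profile ustar ++ [bit]
    obtain ⟨u', L₁, he', hlev', hL₁, hrw⟩ := mem_succ_elim hm (profile_mem ⟨L, hL⟩)
    rw [hrw]
    have h1 : L₁ ≤ profile A w u' := profile_max he'.1 hL₁
    have h2 : profile A w u' ≤ profile A w ustar := hmax u' he'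
    have hlen1 : L₁.length = (profile A w u').length := by
      rw [mem_length hL₁, profile_length he'.1]
    have hlev'' : u'.2 = ustar.2 := by
      have a1 := he'.2.1; have a2 := hustar.2.1; omega
    have hlen2 : (profile A w u').length = (profile A w ustar).length := by
      rw [profile_length he'.1, profile_length hustar.1, hlev'']
    exact le_append_last (le_trans h1 h2) (by omega) _
  · exact profile_max ⟨L, hL⟩ (mem_succ_intro hustar' (profile_mem hustar'.1))

theorem edgeG'_profile [Fintype Q] {u v : Q × ℕ} (he : edgeG' A w u v) :
    profile A w v = profile A w u ++ [if v.1 ∈ A.F then 1 else 0] := by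
  have hm : v.2 = u.2 + 1 := he.1.2.1
  obtain ⟨u₀, he₀, hlev₀, hmem₀, hpr⟩ := exists_edgeG'_parent (memV_of_edge he.1) hm
  have h1 : profile A w u₀ ≤ profile A w u := lexLE_iff.mp (he.2 u₀ he₀.1)
  have h2 : profile A w u ≤ profile A w u₀ := lexLE_iff.mp (he₀.2 u he.1)
  rw [hpr, le_antisymm h2 h1]

theorem edgeG'_profile_dropLast [Fintype Q] {u v : Q × ℕ} (he : edgeG' A w u v) :
    profile A w u = (profile A w v).dropLast := by
  rw [edgeG'_profile he, List.dropLast_concat]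

end B

/-! ### Section C : classes -/

section C
variable {Alph Q : Type*} {A : NBW Alph Q} {w : ℕ → Alph}

theorem bit_eq_of_profile_eq [Fintype Q] {x u : Q × ℕ} (hx : memV A w x) (hu : memV A w u)
    (hlev : x.2 = u.2) (hp : profile A w x = profile A w u) :
    (if x.1 ∈ A.F then (1:ℕ) else 0) = if u.1 ∈ A.F then 1 else 0 := by
  obtain ⟨Lx, hLx⟩ := profile_concat hx
  obtain ⟨Lu, hLu⟩ := profile_concat hu
  have hlx : Lx.length = x.2 := by
    have := profile_length hx; rw [hLx] at this; simp at this; omega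
  have hlu : Lu.length = u.2 := by
    have := profile_length hu; rw [hLu] at this; simp at this; omega
  rw [hLx, hLu] at hp
  have := List.append_inj_right hp (by omega)
  exact (List.cons.injEq _ _ _ _ ▸ this : _ ∧ _).1

theorem memF_iff_of_profile_eq [Fintype Q] {x u : Q × ℕ} (hx : memV A w x) (hu : memV A w u)
    (hlev : x.2 = u.2) (hp : profile A w x = profile A w u) :
    x.1 ∈ A.F ↔ u.1 ∈ A.F := by
  have h := bit_eq_of_profile_eq hx hu hlev hp
  by_cases h1 : x.1 ∈ A.F <;> by_cases h2 : u.1 ∈ A.F <;>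
    simp [h1, h2] at h ⊢

theorem isFClass_classOf [Fintype Q] {u : Q × ℕ} (hu : memV A w u) (hF : u.1 ∈ A.F) :
    IsFClass A (classOf A w u) := by
  rintro x ⟨hxm, hxl, hxp⟩
  exact (memF_iff_of_profile_eq hxm hu hxl hxp).mpr hF

end C

/-! ### Section D : chain extraction -/

theorem exists_chain {α : Type*} (S : ℕ → α → Prop) (R : α → α → Prop)
    (h0 : ∃ a, S 0 a) (hstep : ∀ n a, S n a → ∃ b, S (n+1) b ∧ R a b) :
    ∃ f : ℕ → α, (∀ n, S n (f n)) ∧ ∀ n, R (f n) (f (n+1)) := by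
  choose a0 ha0 using h0
  choose g hg1 hg2 using hstep
  let f : ∀ n : ℕ, {a // S n a} := fun n =>
    Nat.rec ⟨a0, ha0⟩ (fun n p => ⟨g n p.1 p.2, hg1 n p.1 p.2⟩) n
  exact ⟨fun n => (f n).1, fun n => (f n).2, fun n => hg2 n (f n).1 (f n).2⟩

section D
variable {Alph Q : Type*} {A : NBW Alph Q} {w : ℕ → Alph}

theorem rtg_level_le {R : Q × ℕ → Q × ℕ → Prop}
    (hR : ∀ x y, R x y → y.2 = x.2 + 1) {x y : Q × ℕ}
    (h : Relation.ReflTransGen R x y) : x.2 ≤ y.2 := by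
  induction h with
  | refl => exact le_rfl
  | tail hxy hstep ih =>
    have := hR _ _ hstep; omega

theorem rtg_truncate {R : Q × ℕ → Q × ℕ → Prop}
    (hR : ∀ x y, R x y → y.2 = x.2 + 1) {x y : Q × ℕ}
    (h : Relation.ReflTransGen R x y) :
    ∀ m, x.2 ≤ m → m ≤ y.2 → ∃ z, z.2 = m ∧ Relation.ReflTransGen R x z := by
  induction h with
  | refl => intro m h1 h2; exact ⟨x, by omega, Relation.ReflTransGen.refl⟩
  | @tail b c hxy hstep ih =>
    intro m h1 h2
    have hc := hR _ _ hstep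
    by_cases hm : m ≤ b.2
    · exact ih m h1 hm
    · exact ⟨c, by omega, hxy.tail hstep⟩

theorem tree_accepting_to_accepts [Fintype Q] (h : TreeAccepting A w) : AcceptsNBW A w := by
  obtain ⟨b, ⟨hcls, hchild⟩, hFinf⟩ := h
  -- membership facts
  have hbmem : ∀ i x, x ∈ b i → memV A w x ∧ x.2 = i := by
    intro i x hx
    obtain ⟨u, hum, hul, hbeq⟩ := hcls i
    rw [hbeq] at hx
    exact ⟨hx.1, by rw [hx.2.1, hul]⟩
  have hne : ∀ i, (b i).Nonempty := by
    intro i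
    obtain ⟨u, hum, hul, hbeq⟩ := hcls i
    exact ⟨u, by rw [hbeq]; exact ⟨hum, rfl, rfl⟩⟩
  have parent_in : ∀ i x y, y ∈ b (i+1) → edgeG' A w x y → x ∈ b i := by
    intro i x y hy hxy
    obtain ⟨u, v', he', hv', hbu, hbv⟩ := hchild i
    obtain ⟨ui, humi, huli, hbeqi⟩ := hcls i
    have hu2 : u.2 = i := by
      have humem : u ∈ b i := by rw [hbu]; exact ⟨he'.1.1, rfl, rfl⟩
      rw [hbeqi] at humem; rw [humem.2.1, huli]
    rw [hbv] at hy
    have hpy : profile A w y = profile A w v' := hy.2.2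
    have hpx : profile A w x = profile A w u := by
      rw [edgeG'_profile_dropLast hxy, edgeG'_profile_dropLast he', hpy]
    have hx2 : x.2 = i := by
      have h1 : y.2 = x.2 + 1 := hxy.1.2.1
      have h2 : y.2 = v'.2 := hy.2.1
      have h3 : v'.2 = u.2 + 1 := he'.1.2.1
      omega
    rw [hbu]
    exact ⟨hxy.1.1, by rw [hx2, hu2], hpx⟩
  have has_parent : ∀ i y, y ∈ b (i+1) → ∃ x, edgeG' A w x y ∧ x ∈ b i ∧ x.2 = i := by
    intro i y hy
    obtain ⟨hym, hyl⟩ := hbmem _ _ hy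
    obtain ⟨x, hx, hxl, -, -⟩ := exists_edgeG'_parent hym hyl
    exact ⟨x, hx, parent_in i x y hy hx, hxl⟩
  set R : Q × ℕ → Q × ℕ → Prop :=
    fun x y => edgeG' A w x y ∧ x ∈ b x.2 ∧ y ∈ b y.2 with hRdef
  have hRlev : ∀ x y, R x y → y.2 = x.2 + 1 := fun x y h => h.1.1.2.1
  -- walk-back
  have hwb : ∀ n (y : Q × ℕ), y ∈ b n → y.2 = n →
      ∃ x, x.2 = 0 ∧ x ∈ b 0 ∧ Relation.ReflTransGen R x y := by
    intro n
    induction n with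
    | zero => intro y hy hyl; exact ⟨y, hyl, hy, Relation.ReflTransGen.refl⟩
    | succ m ih =>
      intro y hy hyl
      obtain ⟨x, hxy, hxb, hxl⟩ := has_parent m y hy
      obtain ⟨x0, h0l, h0b, h0p⟩ := ih x hxb hxl
      exact ⟨x0, h0l, h0b, h0p.tail ⟨hxy, by rwa [hxl], by rwa [hyl]⟩⟩
  set S : ℕ → Q × ℕ → Prop := fun i x => x.2 = i ∧ x ∈ b i ∧
    ∀ n, i ≤ n → ∃ y, y.2 = n ∧ Relation.ReflTransGen R x y with hSdef
  -- S 0 nonempty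
  have h0 : ∃ x, S 0 x := by
    choose c hc using hne
    have hcl : ∀ n, (c n).2 = n := fun n => (hbmem n (c n) (hc n)).2
    choose s hs0 hsb hspath using fun n => hwb n (c n) (hc n) (hcl n)
    obtain ⟨q, hq⟩ := Finite.exists_infinite_fiber (fun n => (s n).1)
    have hqinf : {n : ℕ | (s n).1 = q}.Infinite := by
      rw [← Set.infinite_coe_iff]; exact hq
    have hsq : ∀ n, (s n).1 = q → s n = (q, 0) := by
      intro n hn; exact Prod.ext hn (hs0 n)
    obtain ⟨n₀, hn₀⟩ := hqinf.nonempty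
    refine ⟨(q, 0), rfl, by rw [← hsq n₀ hn₀]; exact hsb n₀, ?_⟩
    intro n hn
    obtain ⟨m, hm, hmgt⟩ := hqinf.exists_gt n
    have : Relation.ReflTransGen R (q, 0) (c m) := by
      rw [← hsq m hm]; exact hspath m
    have hcm2 : (c m).2 = m := hcl m
    exact rtg_truncate hRlev this n (by simp) (by omega)
  -- step
  have hstep : ∀ i x, S i x → ∃ y, S (i+1) y ∧ R x y := by
    rintro i x ⟨hxl, hxb, hxr⟩
    have aux : ∀ n : ℕ, ∃ z, R x z ∧ z.2 = i + 1 ∧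
        ∃ y, y.2 = n + (i+1) ∧ Relation.ReflTransGen R z y := by
      intro n
      obtain ⟨y, hyl, hyp⟩ := hxr (n + (i+1)) (by omega)
      rcases hyp.cases_head with rfl | ⟨z, hz, hzy⟩
      · omega
      · exact ⟨z, hz, by have := hRlev _ _ hz; omega, y, hyl, hzy⟩
    choose d hd1 hd2 hd3 using aux
    obtain ⟨q, hq⟩ := Finite.exists_infinite_fiber (fun n => (d n).1)
    have hqinf : {n : ℕ | (d n).1 = q}.Infinite := by
      rw [← Set.infinite_coe_iff]; exact hq
    have hdq : ∀ n, (d n).1 = q → d n = (q, i+1) := by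
      intro n hn; exact Prod.ext hn (hd2 n)
    obtain ⟨n₀, hn₀⟩ := hqinf.nonempty
    have hR₀ : R x (q, i+1) := by rw [← hdq n₀ hn₀]; exact hd1 n₀
    refine ⟨(q, i+1), ⟨rfl, hR₀.2.2, ?_⟩, hR₀⟩
    intro m hm
    obtain ⟨n, hn, hngt⟩ := hqinf.exists_gt m
    obtain ⟨y, hyl, hyp⟩ := hd3 n
    have : Relation.ReflTransGen R (q, i+1) y := by rw [← hdq n hn]; exact hyp
    exact rtg_truncate hRlev this m (by simp; omega) (by omega)
  obtain ⟨f, hfS, hfR⟩ := exists_chain S R h0 hstep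
  refine ⟨fun n => (f n).1, ⟨?_, ?_⟩, ?_⟩
  · -- initial
    have h00 : (f 0).2 = 0 := (hfS 0).1
    have hmem : memV A w (f 0) := (hbmem 0 (f 0) (hfS 0).2.1).1
    obtain ⟨L, hL⟩ := hmem
    exact (mem_zero h00 hL).2
  · intro i
    have he : edgeG A w (f i) (f (i+1)) := (hfR i).1.1
    have : (f i).2 = i := (hfS i).1
    have := he.2.2
    rwa [(hfS i).1] at this
  · intro n
    obtain ⟨i, hi, hF⟩ := hFinf n
    exact ⟨i, hi, hF (f i) (hfS i).2.1⟩

end D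

/-! ### Section E : accepts implies tree accepting -/

section E
variable {Alph Q : Type*} {A : NBW Alph Q} {w : ℕ → Alph}

theorem dropLast_take_of_le {L : List ℕ} {m : ℕ} (h : m + 1 ≤ L.length) :
    (L.take (m+1)).dropLast = L.take m := by
  rw [List.dropLast_eq_take, List.length_take, List.take_take]
  congr 1
  omega

theorem dropLast_profile_ge [Fintype Q] {u v : Q × ℕ} (he : edgeG A w u v) :
    profile A w u ≤ (profile A w v).dropLast := by
  obtain ⟨ustar, hust, hlev, hmem, hpr⟩ := exists_edgeG'_parent (memV_of_edge he) he.2.1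
  rw [hpr, List.dropLast_concat]
  exact lexLE_iff.mp (hust.2 u he)

theorem exists_ancestor [Fintype Q] : ∀ (k : ℕ) (x : Q × ℕ), memV A w x → k ≤ x.2 →
    ∃ u, memV A w u ∧ u.2 = x.2 - k ∧ profile A w u = (profile A w x).take (x.2 - k + 1) := by
  intro k
  induction k with
  | zero =>
    intro x hx hk
    refine ⟨x, hx, by omega, ?_⟩
    rw [Nat.sub_zero, List.take_of_length_le (by rw [profile_length hx])]
  | succ k ih =>
    intro x hx hk
    obtain ⟨u, hum, hul, hup⟩ := ih x hx (by omega)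
    have hm : u.2 = (x.2 - (k+1)) + 1 := by omega
    obtain ⟨u', hu', hul', hmem', hpr'⟩ := exists_edgeG'_parent hum hm
    refine ⟨u', hmem', hul', ?_⟩
    have : profile A w u' = (profile A w u).dropLast := by
      rw [hpr', List.dropLast_concat]
    rw [this, hup, dropLast_take_of_le]
    · congr 1
      omega
    · rw [profile_length hx]
      omega

theorem exists_ancestor_edge [Fintype Q] {x : Q × ℕ} (hx : memV A w x) {i : ℕ}
    (hi : i + 1 ≤ x.2) :
    ∃ u u', edgeG' A w u u' ∧ memV A w u ∧ memV A w u' ∧ u.2 = i ∧ u'.2 = i + 1 ∧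
      profile A w u = (profile A w x).take (i+1) ∧
      profile A w u' = (profile A w x).take (i+2) := by
  obtain ⟨u', hmem', hul', hup'⟩ := exists_ancestor (x.2 - (i+1)) x hx (by omega)
  have hlev' : u'.2 = i + 1 := by omega
  have hprof' : profile A w u' = (profile A w x).take (i+2) := by
    rw [hup']
    congr 1
    omega
  obtain ⟨u, hu, hul, hmem, hpr⟩ := exists_edgeG'_parent hmem' hlev'
  refine ⟨u, u', hu, hmem, hmem', hul, hlev', ?_, hprof'⟩
  have : profile A w u = (profile A w u').dropLast := by
    rw [hpr, List.dropLast_concat]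
  rw [this, hprof', dropLast_take_of_le]
  rw [profile_length hx]
  omega

theorem accepts_to_tree_accepting [Fintype Q] (h : AcceptsNBW A w) : TreeAccepting A w := by
  obtain ⟨p, ⟨hin, hstep⟩, hFinf⟩ := h
  set v : ℕ → Q × ℕ := fun n => (p n, n) with hvdef
  have hvmem : ∀ n, memV A w (v n) :=
    fun n => ⟨_, ⟨p, hin, fun j _ => hstep j, rfl, rfl⟩⟩
  have hedge : ∀ n, edgeG A w (v n) (v (n+1)) :=
    fun n => ⟨hvmem n, rfl, hstep n⟩
  set T : ℕ → ℕ → List ℕ := fun i n => (profile A w (v n)).take (i+1) with hTdef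
  have hlenvn : ∀ n, (profile A w (v n)).length = n + 1 := fun n => profile_length (hvmem n)
  have hTmono1 : ∀ i n, i ≤ n → T i n ≤ T i (n+1) := by
    intro i n hi
    have h1 : profile A w (v n) ≤ (profile A w (v (n+1))).dropLast :=
      dropLast_profile_ge (hedge n)
    have hlen : (profile A w (v n)).length = ((profile A w (v (n+1))).dropLast).length := by
      rw [List.length_dropLast, hlenvn, hlenvn]; omega

    have h2 := le_take_of_le h1 hlen (i+1)
    have h3 : ((profile A w (v (n+1))).dropLast).take (i+1) = T i (n+1) := by
      have hm : min (i+1) (n + 1 + 1 - 1) = i + 1 := by omega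
      rw [List.dropLast_eq_take, List.take_take, hlenvn, hm]
    rwa [h3] at h2
  have hTmono : ∀ i m, i ≤ m → ∀ n, m ≤ n → T i m ≤ T i n := by
    intro i m him
    refine Nat.le_induction le_rfl ?_
    intro n hmn ih
    exact le_trans ih (hTmono1 i n (by omega))
  have hTnode : ∀ i n, i ≤ n → ∃ u, memV A w u ∧ u.2 = i ∧ profile A w u = T i n := by
    intro i n hi
    obtain ⟨u, hum, hul, hup⟩ := exists_ancestor (n - i) (v n) (hvmem n)
      (by simp only [hvdef]; omega)
    have h1 : (v n).2 - (n - i) = i := by simp only [hvdef]; omega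
    exact ⟨u, hum, by rw [hul, h1], by rw [hup, h1]⟩
  have hTfull : ∀ n, T n n = profile A w (v n) := by
    intro n
    exact List.take_of_length_le (by rw [hlenvn])
  -- stabilization
  have hstab : ∀ i, ∃ N, i ≤ N ∧ ∀ n, N ≤ n → T i n = T i N := by
    intro i
    have hfin : {L | ∃ n, i ≤ n ∧ T i n = L}.Finite := by
      apply Set.Finite.subset (Set.finite_range (fun q : Q => profile A w (q, i)))
      rintro L ⟨n, hn, rfl⟩
      obtain ⟨u, hum, hul, hup⟩ := hTnode i n hn
      refine ⟨u.1, ?_⟩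
      show profile A w (u.1, i) = T i n
      have hu : ((u.1 : Q), i) = u := by rw [← hul]
      rw [hu, hup]
    obtain ⟨L, ⟨N, hiN, hTN⟩, hmax⟩ :=
      Set.exists_max_image _ id hfin ⟨T i i, i, le_rfl, rfl⟩
    refine ⟨N, hiN, fun n hn => ?_⟩
    have h1 : T i N ≤ T i n := hTmono i N hiN n hn
    have h2 : T i n ≤ L := hmax _ ⟨n, by omega, rfl⟩
    rw [← hTN] at h2
    exact le_antisymm h2 h1
  choose N hN1 hN2 using hstab
  set β : ℕ → List ℕ := fun i => T i (N i) with hβdef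
  have hβup : ∀ i n, i ≤ n → T i n ≤ β i := by
    intro i n hn
    by_cases hc : n ≤ N i
    · exact hTmono i n hn (N i) hc
    · exact le_of_eq (hN2 i n (by omega))
  have hβeq : ∀ i n, N i ≤ n → T i n = β i := fun i n hn => hN2 i n hn
  have hβlen : ∀ i, (β i).length = i + 1 := by
    intro i
    show (T i (N i)).length = i + 1
    rw [hTdef]
    simp only [List.length_take, hlenvn]
    have := hN1 i
    omega
  have hβtake : ∀ i j, i ≤ j → (β j).take (i+1) = β i := by
    intro i j hij
    set n := max (N i) (N j) with hn
    have h1 : T i n = β i := hβeq i n (le_max_left _ _)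
    have h2 : T j n = β j := hβeq j n (le_max_right _ _)
    rw [← h1, ← h2, hTdef]
    simp only [List.take_take]
    congr 1
    omega
  -- the branch
  set b : ℕ → Set (Q × ℕ) :=
    fun i => {x : Q × ℕ | memV A w x ∧ x.2 = i ∧ profile A w x = β i} with hbdef
  have hbclass : ∀ i (u : Q × ℕ), memV A w u → u.2 = i → profile A w u = β i →
      b i = classOf A w u := by
    intro i u hum hul hup
    ext x
    simp only [hbdef, Set.mem_setOf_eq, classOf, hul, hup]
  have hclassAt : ∀ i, ClassAt A w (b i) i := by
    intro i
    obtain ⟨u, hum, hul, hup⟩ := hTnode i (N i) (hN1 i)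
    exact ⟨u, hum, hul, hbclass i u hum hul hup⟩
  have hchild : ∀ i, childC A w (b i) (b (i+1)) := by
    intro i
    set n := max (N i) (N (i+1)) with hn
    have hn1 : i + 1 ≤ (v n).2 := by
      have := hN1 (i+1); simp only [hvdef]; omega
    obtain ⟨u, u', he, hmu, hmu', hul, hul', hpu, hpu'⟩ :=
      exists_ancestor_edge (hvmem n) hn1
    have hβu : profile A w u = β i := by
      rw [hpu]; exact hβeq i n (le_max_left _ _)
    have hβu' : profile A w u' = β (i+1) := by
      rw [hpu']; exact hβeq (i+1) n (le_max_right _ _)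
    exact ⟨u, u', he, hmu', (hbclass i u hmu hul hβu).symm ▸ rfl,
      (hbclass (i+1) u' hmu' hul' hβu').symm ▸ rfl⟩
  refine ⟨b, ⟨hclassAt, hchild⟩, ?_⟩
  -- acceptance
  by_contra hcon
  push_neg at hcon
  obtain ⟨n₀, hn₀⟩ := hcon
  -- all β i for i ≥ n₀ end in 0
  have hβlast0 : ∀ i, n₀ ≤ i → ∃ L', β i = L' ++ [0] := by
    intro i hi
    obtain ⟨x, hx, hxF⟩ : ∃ x ∈ b i, x.1 ∉ A.F := by
      have := hn₀ i hi
      by_contra hc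
      push_neg at hc
      exact this (fun y hy => hc y hy)
    obtain ⟨hxm, hxl, hxp⟩ := hx
    obtain ⟨L', hL'⟩ := profile_concat hxm
    rw [if_neg hxF] at hL'
    exact ⟨L', by rw [← hxp, hL']⟩
  have hrep : ∀ k, β (n₀ + k) = β n₀ ++ List.replicate k 0 := by
    intro k
    induction k with
    | zero => simp
    | succ k ih =>
      obtain ⟨L', hL'⟩ := hβlast0 (n₀ + (k+1)) (by omega)
      have hdl : L' = β (n₀ + k) := by
        have h1 : (β (n₀ + (k+1))).dropLast = L' := by rw [hL', List.dropLast_concat]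
        have h2 : (β (n₀ + (k+1))).dropLast = (β (n₀ + (k+1))).take (n₀ + k + 1) := by
          have hm : n₀ + (k+1) + 1 - 1 = n₀ + k + 1 := by omega
          rw [List.dropLast_eq_take, hβlen, hm]
        have h3 : (β (n₀ + (k+1))).take (n₀ + k + 1) = β (n₀ + k) :=
          hβtake (n₀ + k) (n₀ + (k+1)) (by omega)
        rw [← h1, h2, h3]
      rw [hL', hdl, ih, List.replicate_succ', ← List.append_assoc]
  -- pick an accepting position far out
  obtain ⟨n, hn, hpF⟩ := hFinf (max (n₀ + 1) (N n₀))
  have hnn₀ : n₀ + 1 ≤ n := le_trans (le_max_left _ _) hn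
  have hnN : N n₀ ≤ n := le_trans (le_max_right _ _) hn
  -- profile (v n) ≤ β n
  have hle : profile A w (v n) ≤ β n := by
    rw [← hTfull n]
    exact hβup n n le_rfl
  have hβn : β n = β n₀ ++ List.replicate (n - n₀) 0 := by
    have := hrep (n - n₀)
    rwa [show n₀ + (n - n₀) = n by omega] at this
  -- prefix of profile (v n)
  have hpre : (profile A w (v n)).take (n₀ + 1) = β n₀ := hβeq n₀ n hnN
  set γ := (profile A w (v n)).drop (n₀ + 1) with hγ
  have hsplit : profile A w (v n) = β n₀ ++ γ := by
    rw [← hpre, hγ, List.take_append_drop]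
  have hγlen : γ.length = n - n₀ := by
    rw [hγ, List.length_drop, hlenvn]
    omega
  have hγle : γ ≤ List.replicate (n - n₀) 0 := by
    apply le_cancel_prefix (L := β n₀)
    rw [← hsplit, ← hβn]
    exact hle
  have hγrep : γ = List.replicate (n - n₀) 0 := eq_replicate_of_le_replicate hγle hγlen
  -- but the last entry of profile (v n) is 1
  obtain ⟨L₁, hL₁⟩ := profile_concat (hvmem n)
  rw [if_pos hpF] at hL₁
  have hlenL₁ : L₁.length = n := by
    have := hlenvn n
    rw [hL₁] at this
    simp at this
    omega
  have hform : profile A w (v n) = (β n₀ ++ List.replicate (n - n₀ - 1) 0) ++ [0] := by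
    rw [hsplit, hγrep, show n - n₀ = (n - n₀ - 1) + 1 by omega, List.replicate_succ',
      ← List.append_assoc]
    have he : n - n₀ - 1 + 1 - 1 = n - n₀ - 1 := by omega
    rw [he]
  have : [(0:ℕ)] = [1] := by
    apply List.append_inj_right (hform.symm.trans hL₁)
    rw [List.length_append, hβlen, List.length_replicate, hlenL₁]
    omega
  simp at this

end E

/-- Theorem: the profile tree is accepting iff `A` accepts `w`. -/
theorem tree_accepting_iff_accepts [Fintype Alph] [Fintype Q]
    (A : NBW Alph Q) (w : ℕ → Alph) :
    TreeAccepting A w ↔ AcceptsNBW A w := by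
  exact ⟨tree_accepting_to_accepts, accepts_to_tree_accepting⟩
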